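/- A function O : {0,1}^6 → {-1,1} is the output of some three-module one-trit classical sequential processor if and only if the 4×16 matrix A1 defined by A1[(X1,X2)][(X3,X4,X5,X6)] = O(X1,...,X6) has at most 3 distinct rows and the 16×4 matrix A2 defined by A2[(X1,X2,X3,X4)][(X5,X6)] = O(X1,...,X6) has at most 3 distinct rows. -/
import Mathlib


/-- Domain of six input bits. -/
abbrev Bits6 := Fin 2 × Fin 2 × Fin 2 × Fin 2 × Fin 2 × Fin 2

/-- Output of a three-module one-trit classical sequential processor given by the
module strategies `g1`, `g2`, `g3`. -/
def output3trit (g1 : Fin 2 × Fin 2 → Fin 3) (g2 : Fin 3 → Fin 2 × Fin 2 → Fin 3)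
    (g3 : Fin 3 → Fin 2 × Fin 2 → ℤ) : Bits6 → ℤ
  | (x1, x2, x3, x4, x5, x6) => g3 (g2 (g1 (x1, x2)) (x3, x4)) (x5, x6)

lemma cover3 {α : Type*} [Inhabited α] {s : Set α} (hfin : s.Finite)
    (h : s.ncard ≤ 3) : ∃ d : Fin 3 → α, ∀ a ∈ s, ∃ i, d i = a := by
  classical
  refine ⟨fun i => hfin.toFinset.toList.getD i default, ?_⟩
  intro a ha
  have hmem : a ∈ hfin.toFinset.toList := by simpa using ha
  obtain ⟨j, hj, hja⟩ := List.getElem_of_mem hmem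
  have hlen : hfin.toFinset.toList.length ≤ 3 := by
    rw [Finset.length_toList]
    rwa [Set.ncard_eq_toFinset_card _ hfin] at h
  exact ⟨⟨j, lt_of_lt_of_le hj hlen⟩, by simp [List.getD_eq_getElem?_getD, List.getElem?_eq_getElem hj, hja]⟩

lemma range_fin3_ncard_le {α : Type*} (f : Fin 3 → α) : (Set.range f).ncard ≤ 3 := by
  have : Set.range f = f '' Set.univ := (Set.image_univ).symm
  rw [this]
  calc (f '' Set.univ).ncard ≤ (Set.univ : Set (Fin 3)).ncard :=
        Set.ncard_image_le Set.finite_univ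
    _ = 3 := by simp [Set.ncard_univ]

/-- existence criterion, one-trit case: a ±1-valued function `O` on six bits
is the output of some three-module one-trit classical sequential processor iff both the
4×16 reshaping and the 16×4 reshaping of `O` have at most 3 distinct rows. -/
theorem stmt3 (O : Bits6 → ℤ) (hO : ∀ x, O x = -1 ∨ O x = 1) :
    (∃ (g1 : Fin 2 × Fin 2 → Fin 3) (g2 : Fin 3 → Fin 2 × Fin 2 → Fin 3)
        (g3 : Fin 3 → Fin 2 × Fin 2 → ℤ),
      (∀ s p, g3 s p = -1 ∨ g3 s p = 1) ∧ O = output3trit g1 g2 g3) ↔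
    ((Set.range (fun p : Fin 2 × Fin 2 =>
        fun q : Fin 2 × Fin 2 × Fin 2 × Fin 2 =>
          O (p.1, p.2, q.1, q.2.1, q.2.2.1, q.2.2.2))).ncard ≤ 3 ∧
     (Set.range (fun p : Fin 2 × Fin 2 × Fin 2 × Fin 2 =>
        fun q : Fin 2 × Fin 2 =>
          O (p.1, p.2.1, p.2.2.1, p.2.2.2, q.1, q.2))).ncard ≤ 3) := by
  classical
  constructor
  · rintro ⟨g1, g2, g3, hg3, rfl⟩
    constructor
    · refine le_trans (Set.ncard_le_ncard ?_ (Set.finite_range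
        (fun s : Fin 3 => fun q : Fin 2 × Fin 2 × Fin 2 × Fin 2 =>
          g3 (g2 s (q.1, q.2.1)) (q.2.2.1, q.2.2.2)))) (range_fin3_ncard_le _)
      rintro f ⟨p, rfl⟩
      exact ⟨g1 (p.1, p.2), rfl⟩
    · refine le_trans (Set.ncard_le_ncard ?_ (Set.finite_range
        (fun s : Fin 3 => fun q : Fin 2 × Fin 2 => g3 s (q.1, q.2))))
        (range_fin3_ncard_le _)
      rintro f ⟨p, rfl⟩
      exact ⟨g2 (g1 (p.1, p.2.1)) (p.2.2.1, p.2.2.2), rfl⟩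
  · rintro ⟨h1, h2⟩
    set R1 : Fin 2 × Fin 2 → (Fin 2 × Fin 2 × Fin 2 × Fin 2 → ℤ) :=
      fun p => fun q => O (p.1, p.2, q.1, q.2.1, q.2.2.1, q.2.2.2) with hR1def
    set R2 : Fin 2 × Fin 2 × Fin 2 × Fin 2 → (Fin 2 × Fin 2 → ℤ) :=
      fun p => fun q => O (p.1, p.2.1, p.2.2.1, p.2.2.2, q.1, q.2) with hR2def
    obtain ⟨d1, hd1⟩ := cover3 (Set.finite_range R1) h1
    obtain ⟨d2, hd2⟩ := cover3 (Set.finite_range R2) h2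
    have H1 : ∀ p, ∃ i, d1 i = R1 p := fun p => hd1 _ ⟨p, rfl⟩
    have H2 : ∀ p, ∃ i, d2 i = R2 p := fun p => hd2 _ ⟨p, rfl⟩
    choose e1 he1 using H1
    choose e2 he2 using H2
    set rep : Fin 3 → Fin 2 × Fin 2 :=
      fun s => if h : ∃ p, e1 p = s then h.choose else default with hrepdef
    have hrep : ∀ p, e1 (rep (e1 p)) = e1 p := by
      intro p
      have hex : ∃ p', e1 p' = e1 p := ⟨p, rfl⟩
      simp only [hrepdef, dif_pos hex]
      exact hex.choose_spec
    refine ⟨e1, fun s c => e2 ((rep s).1, (rep s).2, c.1, c.2),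
      fun t c => if d2 t c = -1 then -1 else 1, ?_, ?_⟩
    · intro s p
      by_cases h : d2 s p = -1 <;> simp [h]
    · funext x
      obtain ⟨x1, x2, x3, x4, x5, x6⟩ := x
      show O (x1, x2, x3, x4, x5, x6) = _
      have hR1eq : R1 (rep (e1 (x1, x2))) = R1 (x1, x2) := by
        rw [← he1 (rep (e1 (x1, x2))), hrep, he1]
      have hR2eq : R2 ((rep (e1 (x1, x2))).1, (rep (e1 (x1, x2))).2, x3, x4)
          = R2 (x1, x2, x3, x4) := by
        funext q
        have := congrFun hR1eq (x3, x4, q.1, q.2)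
        simpa [hR1def, hR2def] using this
      have key : d2 (e2 ((rep (e1 (x1, x2))).1, (rep (e1 (x1, x2))).2, x3, x4)) (x5, x6)
          = O (x1, x2, x3, x4, x5, x6) := by
        rw [he2, hR2eq]
      show O (x1, x2, x3, x4, x5, x6) =
        (if d2 (e2 ((rep (e1 (x1, x2))).1, (rep (e1 (x1, x2))).2, (x3, x4).1, (x3, x4).2))
            (x5, x6) = -1 then -1 else 1)
      rw [key]
      rcases hO (x1, x2, x3, x4, x5, x6) with h | h <;> rw [h] <;> simp
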